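/- Let Σ be a positive semidefinite p × p real matrix and let T₀ ⊆ {1,…,p} with |T₀| = S ≥ 1 and p ≥ 3S. If 1 − δ_{2S}(Σ) − θ_{S,2S}(Σ) > 0, then φ_{2S}(T₀; Σ) > 0. -/

import Mathlib

open Matrix Finset

open Matrix Finset

noncomputable def l1 {p : ℕ} (h : Fin p → ℝ) : ℝ := ∑ j, |h j|
noncomputable def l2 {p : ℕ} (h : Fin p → ℝ) : ℝ := Real.sqrt (∑ j, (h j) ^ 2)
noncomputable def lqNorm {p : ℕ} (q : ℝ) (h : Fin p → ℝ) : ℝ := (∑ j, |h j| ^ q) ^ (1 / q)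
noncomputable def linf {p : ℕ} (h : Fin p → ℝ) : ℝ := ⨆ j, |h j|
def restr {p : ℕ} (T : Finset (Fin p)) (h : Fin p → ℝ) : Fin p → ℝ :=
  fun j => if j ∈ T then h j else 0
def coneC {p : ℕ} (T : Finset (Fin p)) (h : Fin p → ℝ) : Prop :=
  l1 (restr Tᶜ h) ≤ l1 (restr T h)
noncomputable def quad {p : ℕ} (M : Matrix (Fin p) (Fin p) ℝ) (h : Fin p → ℝ) : ℝ :=
  h ⬝ᵥ M.mulVec h

/-- Compatibility factor `κ(T₀; M) = inf_{0 ≠ h ∈ C_{T₀}} √|T₀| (hᵀMh)^{1/2} / ‖h_{T₀}‖₁`. -/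
noncomputable def kappa {p : ℕ} (T0 : Finset (Fin p)) (M : Matrix (Fin p) (Fin p) ℝ) : ℝ :=
  sInf {x | ∃ h : Fin p → ℝ, h ≠ 0 ∧ coneC T0 h ∧
    x = Real.sqrt (T0.card) * Real.sqrt (quad M h) / l1 (restr T0 h)}

/-- Restricted eigenvalue `RE(T₀; M) = inf_{0 ≠ h ∈ C_{T₀}} (hᵀMh)^{1/2} / ‖h‖₂`. -/
noncomputable def RE {p : ℕ} (T0 : Finset (Fin p)) (M : Matrix (Fin p) (Fin p) ℝ) : ℝ :=
  sInf {x | ∃ h : Fin p → ℝ, h ≠ 0 ∧ coneC T0 h ∧ x = Real.sqrt (quad M h) / l2 h}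

/-- Weak cone invertibility factor
`F_q(T₀; M) = inf_{0 ≠ h ∈ C_{T₀}} |T₀|^{1/q} (hᵀMh) / (‖h_{T₀}‖₁ ‖h‖_q)`. -/
noncomputable def Fq {p : ℕ} (q : ℝ) (T0 : Finset (Fin p)) (M : Matrix (Fin p) (Fin p) ℝ) : ℝ :=
  sInf {x | ∃ h : Fin p → ℝ, h ≠ 0 ∧ coneC T0 h ∧
    x = (T0.card : ℝ) ^ (1 / q) * quad M h / (l1 (restr T0 h) * lqNorm q h)}

/-- The factor `φ_{2S}(T₀; M)`, an infimum over supersets `T ⊇ T₀` with `|T| ≤ 2S` and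
nonzero `h ∈ D_{T₀,T}` of `(hᵀMh)^{1/2}/‖h_T‖₂`. -/
noncomputable def phi2S {p : ℕ} (S : ℕ) (T0 : Finset (Fin p)) (M : Matrix (Fin p) (Fin p) ℝ) : ℝ :=
  sInf {x | ∃ T : Finset (Fin p), T0 ⊆ T ∧ T.card ≤ 2 * S ∧
    ∃ h : Fin p → ℝ, h ≠ 0 ∧ coneC T0 h ∧
      (∀ j ∈ T \ T0, linf (restr Tᶜ h) ≤ |h j|) ∧
      x = Real.sqrt (quad M h) / l2 (restr T h)}

/-- Restricted isometry constant `δ_N(M)`: the smallest `δ ≥ 0` such that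
`(1-δ)‖h‖₂² ≤ hᵀM_{T,T}h ≤ (1+δ)‖h‖₂²` for all `T` with `|T| ≤ N` and `h` supported on `T`. -/
noncomputable def deltaRIC {p : ℕ} (N : ℕ) (M : Matrix (Fin p) (Fin p) ℝ) : ℝ :=
  sInf {δ : ℝ | 0 ≤ δ ∧ ∀ T : Finset (Fin p), T.card ≤ N →
    ∀ h : Fin p → ℝ, (∀ j, j ∉ T → h j = 0) →
      (1 - δ) * (∑ j, (h j) ^ 2) ≤ quad M h ∧ quad M h ≤ (1 + δ) * (∑ j, (h j) ^ 2)}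

/-- Restricted orthogonality constant `θ_{S,S'}(M)`: the smallest `θ ≥ 0` such that
`|hᵀM_{T,T'}h'| ≤ θ‖h‖₂‖h'‖₂` for all disjoint `T, T'` with `|T| ≤ S`, `|T'| ≤ S'`. -/
noncomputable def thetaROC {p : ℕ} (S S' : ℕ) (M : Matrix (Fin p) (Fin p) ℝ) : ℝ :=
  sInf {θ : ℝ | 0 ≤ θ ∧ ∀ T T' : Finset (Fin p), Disjoint T T' →
    T.card ≤ S → T'.card ≤ S' →
    ∀ h h' : Fin p → ℝ, (∀ j, j ∉ T → h j = 0) → (∀ j, j ∉ T' → h' j = 0) →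
      |h ⬝ᵥ M.mulVec h'| ≤ θ * l2 h * l2 h'}


section AuxLemmas

variable {p : ℕ}

lemma restr_apply_not_mem (U : Finset (Fin p)) (h : Fin p → ℝ) {j : Fin p} (hj : j ∉ U) :
    restr U h j = 0 := by simp [restr, hj]

lemma l1_restr (U : Finset (Fin p)) (h : Fin p → ℝ) :
    l1 (restr U h) = ∑ j ∈ U, |h j| := by
  unfold l1
  have : ∀ j, |restr U h j| = if j ∈ U then |h j| else 0 := by
    intro j; unfold restr; split <;> simp
  simp only [this, Finset.sum_ite_mem, Finset.univ_inter]

lemma sumsq_restr (U : Finset (Fin p)) (h : Fin p → ℝ) :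
    ∑ j, (restr U h j) ^ 2 = ∑ j ∈ U, (h j) ^ 2 := by
  have : ∀ j, (restr U h j) ^ 2 = if j ∈ U then (h j) ^ 2 else 0 := by
    intro j; unfold restr; split <;> simp
  simp only [this, Finset.sum_ite_mem, Finset.univ_inter]

lemma l2_restr (U : Finset (Fin p)) (h : Fin p → ℝ) :
    l2 (restr U h) = Real.sqrt (∑ j ∈ U, (h j) ^ 2) := by
  unfold l2; rw [sumsq_restr]

lemma l2_nonneg (h : Fin p → ℝ) : 0 ≤ l2 h := Real.sqrt_nonneg _

lemma l2_restr_mono {U V : Finset (Fin p)} (hUV : U ⊆ V) (h : Fin p → ℝ) :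
    l2 (restr U h) ≤ l2 (restr V h) := by
  rw [l2_restr, l2_restr]
  exact Real.sqrt_le_sqrt (Finset.sum_le_sum_of_subset_of_nonneg hUV
    (fun j _ _ => sq_nonneg _))

lemma restr_add_compl (U : Finset (Fin p)) (h : Fin p → ℝ) :
    restr U h + restr Uᶜ h = h := by
  funext j
  by_cases hj : j ∈ U <;> simp [restr, hj]

lemma quad_nonneg {M : Matrix (Fin p) (Fin p) ℝ} (hM : M.PosSemidef) (v : Fin p → ℝ) :
    0 ≤ quad M v := by
  have := hM.dotProduct_mulVec_nonneg v
  simpa [quad] using this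

lemma abs_le_l2 (u : Fin p → ℝ) (i : Fin p) : |u i| ≤ l2 u := by
  unfold l2
  rw [← Real.sqrt_sq_eq_abs]
  exact Real.sqrt_le_sqrt (Finset.single_le_sum (f := fun k => u k ^ 2)
    (fun k _ => sq_nonneg _) (Finset.mem_univ i))

lemma dot_abs_le (M : Matrix (Fin p) (Fin p) ℝ) (u u' : Fin p → ℝ) :
    |u ⬝ᵥ M.mulVec u'| ≤ (∑ i, ∑ j, |M i j|) * l2 u * l2 u' := by
  have step1 : |u ⬝ᵥ M.mulVec u'| ≤ ∑ i, ∑ j, |u i| * |M i j| * |u' j| := by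
    simp only [dotProduct, Matrix.mulVec, Finset.mul_sum]
    refine le_trans (Finset.abs_sum_le_sum_abs _ _) (Finset.sum_le_sum fun i _ => ?_)
    refine le_trans (Finset.abs_sum_le_sum_abs _ _) (Finset.sum_le_sum fun j _ => ?_)
    rw [abs_mul, abs_mul]; ring_nf; exact le_refl _
  refine le_trans step1 ?_
  have step2 : ∀ i j : Fin p, |u i| * |M i j| * |u' j| ≤ |M i j| * (l2 u * l2 u') := by
    intro i j
    have h1 := abs_le_l2 u i
    have h2 := abs_le_l2 u' j
    have h3 : |u i| * |u' j| ≤ l2 u * l2 u' :=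
      mul_le_mul h1 h2 (abs_nonneg _) (le_trans (abs_nonneg _) h1)
    nlinarith [abs_nonneg (M i j), abs_nonneg (u i), abs_nonneg (u' j)]
  calc ∑ i, ∑ j, |u i| * |M i j| * |u' j|
      ≤ ∑ i, ∑ j, |M i j| * (l2 u * l2 u') :=
        Finset.sum_le_sum fun i _ => Finset.sum_le_sum fun j _ => step2 i j
    _ = (∑ i, ∑ j, |M i j|) * l2 u * l2 u' := by
        simp only [← Finset.sum_mul, mul_assoc]

lemma dot_symm {M : Matrix (Fin p) (Fin p) ℝ} (hsym : ∀ i j, M i j = M j i)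
    (u v : Fin p → ℝ) : u ⬝ᵥ M.mulVec v = v ⬝ᵥ M.mulVec u := by
  simp only [dotProduct, Matrix.mulVec, Finset.mul_sum]
  rw [Finset.sum_comm]
  exact Finset.sum_congr rfl fun i _ => Finset.sum_congr rfl fun j _ => by
    rw [hsym j i]; ring

lemma psd_symm {M : Matrix (Fin p) (Fin p) ℝ} (hM : M.PosSemidef) (i j : Fin p) :
    M i j = M j i := by
  have := congrFun (congrFun hM.1 i) j
  simpa [Matrix.conjTranspose_apply] using this.symm

lemma quad_cs {M : Matrix (Fin p) (Fin p) ℝ} (hM : M.PosSemidef) (u v : Fin p → ℝ) :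
    (u ⬝ᵥ M.mulVec v) ^ 2 ≤ quad M u * quad M v := by
  have hsym := psd_symm hM
  have expand : ∀ t : ℝ, quad M (t • u + v) =
      quad M u * (t * t) + (2 * (u ⬝ᵥ M.mulVec v)) * t + quad M v := by
    intro t
    unfold quad
    rw [Matrix.mulVec_add, Matrix.mulVec_smul]
    simp only [dotProduct_add, add_dotProduct, dotProduct_smul,
      smul_dotProduct, smul_eq_mul]
    rw [dot_symm hsym v u]
    ring
  have key : ∀ t : ℝ, 0 ≤ quad M u * (t * t) + (2 * (u ⬝ᵥ M.mulVec v)) * t + quad M v := by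
    intro t; rw [← expand t]; exact quad_nonneg hM _
  have := discrim_le_zero key
  unfold discrim at this
  nlinarith [this]

lemma top_subset (f : Fin p → ℝ) :
    ∀ (n : ℕ) (U : Finset (Fin p)), n ≤ U.card →
    ∃ A ⊆ U, A.card = n ∧ ∀ a ∈ A, ∀ b ∈ U \ A, f b ≤ f a := by
  intro n
  induction n with
  | zero => exact fun U _ => ⟨∅, Finset.empty_subset U, rfl, by simp⟩
  | succ m ih =>
    intro U hU
    obtain ⟨A, hAU, hAcard, hAtop⟩ := ih U (le_trans (Nat.le_succ m) hU)
    have hne : (U \ A).Nonempty := by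
      rw [← Finset.card_pos, Finset.card_sdiff_of_subset hAU]; omega
    obtain ⟨b₀, hb₀, hmax⟩ := Finset.exists_max_image (U \ A) f hne
    refine ⟨insert b₀ A, ?_, ?_, ?_⟩
    · exact Finset.insert_subset (Finset.mem_sdiff.1 hb₀).1 hAU
    · rw [Finset.card_insert_of_notMem (Finset.mem_sdiff.1 hb₀).2, hAcard]
    · intro a ha b hb
      have hbU : b ∈ U \ A := by
        rcases Finset.mem_sdiff.1 hb with ⟨h1, h2⟩
        exact Finset.mem_sdiff.2 ⟨h1, fun hbA => h2 (Finset.mem_insert_of_mem hbA)⟩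
      rcases Finset.mem_insert.1 ha with rfl | haA
      · exact hmax b hbU
      · exact hAtop a haA b hbU

lemma cross_bound {S : ℕ} (hS : 1 ≤ S) {M : Matrix (Fin p) (Fin p) ℝ}
    (hsym : ∀ i j, M i j = M j i) {θ' : ℝ} (hθ0 : 0 ≤ θ')
    (hθ : ∀ T T' : Finset (Fin p), Disjoint T T' → T.card ≤ S → T'.card ≤ 2 * S →
      ∀ u u' : Fin p → ℝ, (∀ j, j ∉ T → u j = 0) → (∀ j, j ∉ T' → u' j = 0) →
      |u ⬝ᵥ M.mulVec u'| ≤ θ' * l2 u * l2 u')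
    (h g : Fin p → ℝ) (Tg : Finset (Fin p)) (hgsupp : ∀ j, j ∉ Tg → g j = 0)
    (hTg : Tg.card ≤ 2 * S) :
    ∀ (n : ℕ) (U : Finset (Fin p)), U.card ≤ n → Disjoint U Tg →
      ∀ t : ℝ, 0 ≤ t → (∀ j ∈ U, |h j| ≤ t) →
      |g ⬝ᵥ M.mulVec (restr U h)| ≤
        θ' * l2 g * (Real.sqrt S * t + (∑ j ∈ U, |h j|) / Real.sqrt S) := by
  have hsS : (0 : ℝ) < Real.sqrt S := Real.sqrt_pos.2 (by exact_mod_cast hS)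
  have hl2bound : ∀ (V : Finset (Fin p)) (t : ℝ), 0 ≤ t → V.card ≤ S →
      (∀ j ∈ V, |h j| ≤ t) → l2 (restr V h) ≤ Real.sqrt S * t := by
    intro V t ht hV hVt
    rw [l2_restr]
    have hsum : ∑ j ∈ V, (h j) ^ 2 ≤ (S : ℝ) * t ^ 2 := by
      calc ∑ j ∈ V, (h j) ^ 2 ≤ ∑ j ∈ V, t ^ 2 := by
            refine Finset.sum_le_sum fun j hj => ?_
            have := hVt j hj
            nlinarith [abs_nonneg (h j), sq_abs (h j)]
        _ = (V.card : ℝ) * t ^ 2 := by rw [Finset.sum_const, nsmul_eq_mul]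
        _ ≤ (S : ℝ) * t ^ 2 := by
            have : (V.card : ℝ) ≤ (S : ℝ) := by exact_mod_cast hV
            nlinarith [sq_nonneg t]
    calc Real.sqrt (∑ j ∈ V, (h j) ^ 2) ≤ Real.sqrt ((S : ℝ) * t ^ 2) :=
          Real.sqrt_le_sqrt hsum
      _ = Real.sqrt S * t := by
          rw [Real.sqrt_mul (Nat.cast_nonneg S), Real.sqrt_sq ht]
  have hsingle : ∀ (V : Finset (Fin p)) (t : ℝ), 0 ≤ t → V.card ≤ S →
      (∀ j ∈ V, |h j| ≤ t) → Disjoint V Tg →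
      |g ⬝ᵥ M.mulVec (restr V h)| ≤ θ' * l2 g * (Real.sqrt S * t) := by
    intro V t ht hV hVt hdisj
    rw [dot_symm hsym]
    have happ := hθ V Tg hdisj hV hTg (restr V h) g
      (fun j hj => restr_apply_not_mem V h hj) hgsupp
    calc |restr V h ⬝ᵥ M.mulVec g| ≤ θ' * l2 (restr V h) * l2 g := happ
      _ ≤ θ' * l2 g * (Real.sqrt S * t) := by
          have h1 := hl2bound V t ht hV hVt
          have h2 := l2_nonneg g
          have h3 := l2_nonneg (restr V h)
          nlinarith [mul_le_mul_of_nonneg_left h1 (mul_nonneg hθ0 h2)]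
  intro n
  induction n with
  | zero =>
    intro U hU _ t ht htU
    have hUe : U = ∅ := Finset.card_eq_zero.1 (Nat.le_zero.1 hU)
    subst hUe
    have : restr (∅ : Finset (Fin p)) h = 0 := by
      funext j; simp [restr]
    rw [this]
    simp only [Matrix.mulVec_zero, dotProduct_zero, abs_zero,
      Finset.sum_empty, zero_div, add_zero]
    exact mul_nonneg (mul_nonneg hθ0 (l2_nonneg g)) (mul_nonneg (Real.sqrt_nonneg _) ht)
  | succ n ih =>
    intro U hU hdisj t ht htU
    by_cases hc : U.card ≤ S
    · calc |g ⬝ᵥ M.mulVec (restr U h)| ≤ θ' * l2 g * (Real.sqrt S * t) :=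
            hsingle U t ht hc htU hdisj
        _ ≤ θ' * l2 g * (Real.sqrt S * t + (∑ j ∈ U, |h j|) / Real.sqrt S) := by
            have h1 : 0 ≤ (∑ j ∈ U, |h j|) / Real.sqrt S := by
              apply div_nonneg _ hsS.le
              exact Finset.sum_nonneg fun j _ => abs_nonneg _
            have h2 : 0 ≤ θ' * l2 g := mul_nonneg hθ0 (l2_nonneg g)
            nlinarith
    · push_neg at hc
      obtain ⟨B, hBU, hBcard, hBtop⟩ := top_subset (fun j => |h j|) S U hc.le
      have hBne : B.Nonempty := Finset.card_pos.1 (by omega)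
      obtain ⟨j₀, hj₀B, hmin⟩ := Finset.exists_min_image B (fun j => |h j|) hBne
      set t' := |h j₀| with ht'def
      have ht' : 0 ≤ t' := abs_nonneg _
      have hsplit : restr U h = restr B h + restr (U \ B) h := by
        funext j
        by_cases hjB : j ∈ B
        · have hjU : j ∈ U := hBU hjB
          simp [restr, hjU, hjB, Finset.mem_sdiff]
        · by_cases hjU : j ∈ U <;> simp [restr, hjU, hjB, Finset.mem_sdiff]
      have habs : |g ⬝ᵥ M.mulVec (restr U h)| ≤
          |g ⬝ᵥ M.mulVec (restr B h)| + |g ⬝ᵥ M.mulVec (restr (U \ B) h)| := by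
        rw [hsplit, Matrix.mulVec_add, dotProduct_add]
        exact abs_add_le _ _
      have hterm1 : |g ⬝ᵥ M.mulVec (restr B h)| ≤ θ' * l2 g * (Real.sqrt S * t) :=
        hsingle B t ht hBcard.le (fun j hj => htU j (hBU hj))
          (Finset.disjoint_of_subset_left hBU hdisj)
      have hcard' : (U \ B).card ≤ n := by
        rw [Finset.card_sdiff_of_subset hBU]; omega
      have hterm2 := ih (U \ B) hcard'
        (Finset.disjoint_of_subset_left (Finset.sdiff_subset) hdisj) t' ht'
        (fun j hj => hBtop j₀ hj₀B j hj)
      -- √S * t' ≤ (∑ j ∈ B, |h j|) / √S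
      have hSt' : Real.sqrt S * t' ≤ (∑ j ∈ B, |h j|) / Real.sqrt S := by
        have hsum : (S : ℝ) * t' ≤ ∑ j ∈ B, |h j| := by
          have := Finset.card_nsmul_le_sum B (fun j => |h j|) t' (fun j hj => hmin j hj)
          rwa [hBcard, nsmul_eq_mul] at this
        rw [le_div_iff₀ hsS]
        calc Real.sqrt S * t' * Real.sqrt S = (Real.sqrt S * Real.sqrt S) * t' := by ring
          _ = (S : ℝ) * t' := by rw [Real.mul_self_sqrt (Nat.cast_nonneg S)]
          _ ≤ ∑ j ∈ B, |h j| := hsum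
      have hsumsplit : ∑ j ∈ U \ B, |h j| + ∑ j ∈ B, |h j| = ∑ j ∈ U, |h j| :=
        Finset.sum_sdiff hBU
      have hc2 : 0 ≤ θ' * l2 g := mul_nonneg hθ0 (l2_nonneg g)
      calc |g ⬝ᵥ M.mulVec (restr U h)|
          ≤ |g ⬝ᵥ M.mulVec (restr B h)| + |g ⬝ᵥ M.mulVec (restr (U \ B) h)| := habs
        _ ≤ θ' * l2 g * (Real.sqrt S * t) +
            θ' * l2 g * (Real.sqrt S * t' + (∑ j ∈ U \ B, |h j|) / Real.sqrt S) := by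
            exact add_le_add hterm1 hterm2
        _ ≤ θ' * l2 g * (Real.sqrt S * t + (∑ j ∈ U, |h j|) / Real.sqrt S) := by
            have key : Real.sqrt S * t' + (∑ j ∈ U \ B, |h j|) / Real.sqrt S ≤
                (∑ j ∈ U, |h j|) / Real.sqrt S := by
              rw [← hsumsplit, add_div]
              linarith [hSt']
            nlinarith [key, hc2]

end AuxLemmas

set_option maxHeartbeats 1000000 in
/-- If `1 - δ_{2S}(Σ) - θ_{S,2S}(Σ) > 0`, then `φ_{2S}(T₀; Σ) > 0`. -/
theorem stmt1 {p S : ℕ} (hS : 1 ≤ S) (hp : 3 * S ≤ p)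
    (M : Matrix (Fin p) (Fin p) ℝ) (hM : M.PosSemidef)
    (T0 : Finset (Fin p)) (hT0 : T0.card = S)
    (hUUP : 0 < 1 - deltaRIC (2 * S) M - thetaROC S (2 * S) M) :
    0 < phi2S S T0 M := by
  classical
  have hsym := psd_symm hM
  set δ := deltaRIC (2 * S) M with hδdef
  set θ := thetaROC S (2 * S) M with hθdef
  set ε := (1 - δ - θ) / 3 with hεdef
  have hε : 0 < ε := by simp only [hεdef]; linarith
  -- the defining sets
  set Dset := {d : ℝ | 0 ≤ d ∧ ∀ T : Finset (Fin p), T.card ≤ 2 * S →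
    ∀ h : Fin p → ℝ, (∀ j, j ∉ T → h j = 0) →
      (1 - d) * (∑ j, (h j) ^ 2) ≤ quad M h ∧ quad M h ≤ (1 + d) * (∑ j, (h j) ^ 2)}
    with hDsetdef
  set Θset := {θ'' : ℝ | 0 ≤ θ'' ∧ ∀ T T' : Finset (Fin p), Disjoint T T' →
    T.card ≤ S → T'.card ≤ 2 * S →
    ∀ h h' : Fin p → ℝ, (∀ j, j ∉ T → h j = 0) → (∀ j, j ∉ T' → h' j = 0) →
      |h ⬝ᵥ M.mulVec h'| ≤ θ'' * l2 h * l2 h'} with hΘsetdef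
  have hδ_eq : δ = sInf Dset := rfl
  have hθ_eq : θ = sInf Θset := rfl
  -- nonemptiness of the defining sets
  set C := ∑ i, ∑ j, |M i j| with hCdef
  have hC0 : 0 ≤ C := Finset.sum_nonneg fun i _ => Finset.sum_nonneg fun j _ => abs_nonneg _
  have hquad_abs : ∀ v : Fin p → ℝ, quad M v ≤ C * (∑ j, (v j) ^ 2) := by
    intro v
    have h1 : |v ⬝ᵥ M.mulVec v| ≤ C * l2 v * l2 v := dot_abs_le M v v
    have h2 : l2 v * l2 v = ∑ j, (v j) ^ 2 :=
      Real.mul_self_sqrt (Finset.sum_nonneg fun j _ => sq_nonneg _)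
    calc quad M v ≤ |v ⬝ᵥ M.mulVec v| := le_abs_self _
      _ ≤ C * l2 v * l2 v := h1
      _ = C * (∑ j, (v j) ^ 2) := by rw [mul_assoc, h2]
  have hDne : Dset.Nonempty := by
    refine ⟨1 + C, by positivity, fun T hT v hv => ⟨?_, ?_⟩⟩
    · have h1 : (1 - (1 + C)) * (∑ j, (v j) ^ 2) ≤ 0 := by
        apply mul_nonpos_of_nonpos_of_nonneg (by linarith)
        exact Finset.sum_nonneg fun j _ => sq_nonneg _
      exact le_trans h1 (quad_nonneg hM v)
    · have := hquad_abs v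
      have hsq : 0 ≤ ∑ j, (v j) ^ 2 := Finset.sum_nonneg fun j _ => sq_nonneg _
      nlinarith
  have hΘne : Θset.Nonempty := by
    refine ⟨C, hC0, fun T T' _ _ _ u u' _ _ => ?_⟩
    exact dot_abs_le M u u'
  -- extract near-optimal members
  have hδ' : ∃ d ∈ Dset, d < δ + ε := by
    by_contra hcon
    push_neg at hcon
    have : δ + ε ≤ sInf Dset := le_csInf hDne hcon
    rw [← hδ_eq] at this
    linarith
  have hθ' : ∃ w ∈ Θset, w < θ + ε := by
    by_contra hcon
    push_neg at hcon
    have : θ + ε ≤ sInf Θset := le_csInf hΘne hcon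
    rw [← hθ_eq] at this
    linarith
  obtain ⟨δ', hδ'mem, hδ'lt⟩ := hδ'
  obtain ⟨θ', hθ'mem, hθ'lt⟩ := hθ'
  have hδ'0 : 0 ≤ δ' := hδ'mem.1
  have hθ'0 : 0 ≤ θ' := hθ'mem.1
  have hδ0 : 0 ≤ δ := by rw [hδ_eq]; exact le_csInf hDne fun b hb => hb.1
  have hθ0 : 0 ≤ θ := by rw [hθ_eq]; exact le_csInf hΘne fun b hb => hb.1
  have hgood : 0 < 1 - δ' - θ' := by
    simp only [hεdef] at hδ'lt hθ'lt
    linarith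
  set sd := Real.sqrt (1 + δ') with hsddef
  have hsd : 0 < sd := Real.sqrt_pos.2 (by linarith)
  set c₀ := (1 - δ' - θ') / sd with hc₀def
  have hc₀ : 0 < c₀ := div_pos hgood hsd
  have hsS : (0 : ℝ) < Real.sqrt S :=
    Real.sqrt_pos.2 (by exact_mod_cast hS)
  -- nonemptiness of the phi2S set
  have hT0ne : T0.Nonempty := Finset.card_pos.1 (by omega)
  obtain ⟨j₁, hj₁⟩ := hT0ne
  have hSsetne : {x | ∃ T : Finset (Fin p), T0 ⊆ T ∧ T.card ≤ 2 * S ∧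
      ∃ h : Fin p → ℝ, h ≠ 0 ∧ coneC T0 h ∧
        (∀ j ∈ T \ T0, linf (restr Tᶜ h) ≤ |h j|) ∧
        x = Real.sqrt (quad M h) / l2 (restr T h)}.Nonempty := by
    refine ⟨_, T0, Finset.Subset.refl T0, by omega,
      (fun j => if j ∈ T0 then (1 : ℝ) else 0), ?_, ?_, by simp, rfl⟩
    · intro hcontra
      have := congrFun hcontra j₁
      simp [hj₁] at this
    · unfold coneC
      rw [l1_restr, l1_restr]
      have h1 : ∑ j ∈ T0ᶜ, |if j ∈ T0 then (1 : ℝ) else 0| = 0 := by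
        apply Finset.sum_eq_zero
        intro j hj
        simp [Finset.mem_compl.1 hj]
      rw [h1]
      exact Finset.sum_nonneg fun j _ => abs_nonneg _
  -- the key lower bound
  have hbound : ∀ x ∈ {x | ∃ T : Finset (Fin p), T0 ⊆ T ∧ T.card ≤ 2 * S ∧
      ∃ h : Fin p → ℝ, h ≠ 0 ∧ coneC T0 h ∧
        (∀ j ∈ T \ T0, linf (restr Tᶜ h) ≤ |h j|) ∧
        x = Real.sqrt (quad M h) / l2 (restr T h)}, c₀ ≤ x := by
    rintro x ⟨T, hT0T, hTcard, h, hh0, hcone, hD, rfl⟩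
    set k := (T \ T0).card with hkdef
    have hTcardeq : T.card = S + k := by
      have h1 : (T \ T0).card = T.card - T0.card := Finset.card_sdiff_of_subset hT0T
      have h2 : T0.card ≤ T.card := Finset.card_le_card hT0T
      omega
    have hkS : k ≤ S := by omega
    have hcompl_card : S - k ≤ Tᶜ.card := by
      rw [Finset.card_compl, Fintype.card_fin]
      omega
    obtain ⟨A, hAsub, hAcard, hAtop⟩ := top_subset (fun j => |h j|) (S - k) Tᶜ hcompl_card
    have hTA : Disjoint T A :=
      Finset.disjoint_right.2 fun a haA => Finset.mem_compl.1 (hAsub haA)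
    set T' := T ∪ A with hT'def
    have hT'card : T'.card = 2 * S := by
      rw [hT'def, Finset.card_union_of_disjoint hTA]
      omega
    have hT0T' : T0 ⊆ T' := hT0T.trans Finset.subset_union_left
    have hTT' : T ⊆ T' := Finset.subset_union_left
    set B₁ := T' \ T0 with hB₁def
    have hB₁card : B₁.card = S := by
      rw [hB₁def, Finset.card_sdiff_of_subset hT0T', hT'card, hT0]
      omega
    have hB₁ne : B₁.Nonempty := Finset.card_pos.1 (by omega)
    obtain ⟨j₀, hj₀B, hmin⟩ := Finset.exists_min_image B₁ (fun j => |h j|) hB₁ne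
    set t := |h j₀| with htdef
    have ht0 : 0 ≤ t := abs_nonneg _
    -- every coordinate outside T' is at most t in absolute value
    have ht_out : ∀ j ∈ T'ᶜ, |h j| ≤ t := by
      intro j hj
      have hjT' : j ∉ T' := Finset.mem_compl.1 hj
      have hjT : j ∉ T := fun hc => hjT' (Finset.mem_union_left _ hc)
      have hjA : j ∉ A := fun hc => hjT' (Finset.mem_union_right _ hc)
      have hj₀T' : j₀ ∈ T' := (Finset.mem_sdiff.1 hj₀B).1
      have hj₀T0 : j₀ ∉ T0 := (Finset.mem_sdiff.1 hj₀B).2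
      rcases Finset.mem_union.1 hj₀T' with hj₀T | hj₀A
      · -- j₀ ∈ T \ T0 : use the D condition
        have hDj₀ := hD j₀ (Finset.mem_sdiff.2 ⟨hj₀T, hj₀T0⟩)
        have hle : |h j| ≤ linf (restr Tᶜ h) := by
          have heq : h j = restr Tᶜ h j := by
            simp [restr, Finset.mem_compl, hjT]
          rw [heq]
          have hb : BddAbove (Set.range fun i => |restr Tᶜ h i|) :=
            Set.Finite.bddAbove (Set.finite_range _)
          exact le_ciSup hb j
        exact le_trans hle hDj₀
      · -- j₀ ∈ A : use the top property of A
        exact hAtop j₀ hj₀A j (Finset.mem_sdiff.2 ⟨Finset.mem_compl.2 hjT, hjA⟩)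
    set w := l2 (restr T' h) with hwdef
    have hw0 : 0 ≤ w := l2_nonneg _
    -- w₀ > 0
    set w₀ := l2 (restr T h) with hw₀def
    have hw₀pos : 0 < w₀ := by
      rcases lt_or_eq_of_le (l2_nonneg (restr T h)) with hpos | heq
      · exact hpos
      · exfalso
        have hsum0 : ∑ j ∈ T, (h j) ^ 2 = 0 := by
          have := heq.symm
          rw [l2_restr] at this
          have hnn : 0 ≤ ∑ j ∈ T, (h j) ^ 2 :=
            Finset.sum_nonneg fun j _ => sq_nonneg _
          nlinarith [Real.sq_sqrt hnn, this]
        have hzT : ∀ j ∈ T, h j = 0 := by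
          intro j hj
          have := (Finset.sum_eq_zero_iff_of_nonneg (fun j _ => sq_nonneg (h j))).1 hsum0 j hj
          exact pow_eq_zero_iff (n := 2) (by norm_num) |>.1 this
        have hl1T0 : ∑ j ∈ T0, |h j| = 0 :=
          Finset.sum_eq_zero fun j hj => by rw [hzT j (hT0T hj), abs_zero]
        have hccone := hcone
        unfold coneC at hccone
        rw [l1_restr, l1_restr, hl1T0] at hccone
        have hzTc : ∀ j ∈ T0ᶜ, h j = 0 := by
          intro j hj
          have hnn : ∀ i ∈ T0ᶜ, 0 ≤ |h i| := fun i _ => abs_nonneg _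
          have := (Finset.sum_eq_zero_iff_of_nonneg hnn).1
            (le_antisymm hccone (Finset.sum_nonneg hnn)) j hj
          exact abs_eq_zero.1 this
        apply hh0
        funext j
        by_cases hj : j ∈ T0
        · exact hzT j (hT0T hj)
        · exact hzTc j (Finset.mem_compl.2 hj)
    have hw₀w : w₀ ≤ w := l2_restr_mono hTT' h
    have hwpos : 0 < w := lt_of_lt_of_le hw₀pos hw₀w
    -- RIC facts for restr T' h
    have hsupp : ∀ j, j ∉ T' → restr T' h j = 0 := fun j hj => restr_apply_not_mem T' h hj
    have hric := hδ'mem.2 T' (le_of_eq hT'card) (restr T' h) hsupp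
    have hw2 : ∑ j, (restr T' h j) ^ 2 = w ^ 2 := by
      rw [hwdef, l2_restr, sumsq_restr]
      rw [Real.sq_sqrt (Finset.sum_nonneg fun j _ => sq_nonneg _)]
    set Q := quad M (restr T' h) with hQdef
    have hQlow : (1 - δ') * w ^ 2 ≤ Q := by
      have := hric.1; rwa [hw2] at this
    have hQhigh : Q ≤ (1 + δ') * w ^ 2 := by
      have := hric.2; rwa [hw2] at this
    have hQ0 : 0 ≤ Q := quad_nonneg hM _
    -- cross term bound
    set cross := restr T' h ⬝ᵥ M.mulVec (restr T'ᶜ h) with hcrossdef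
    have hcrossbnd : |cross| ≤ θ' * w *
        (Real.sqrt S * t + (∑ j ∈ T'ᶜ, |h j|) / Real.sqrt S) := by
      have := cross_bound hS hsym hθ'0 hθ'mem.2 h (restr T' h) T' hsupp
        (le_of_eq hT'card) (T'ᶜ.card) T'ᶜ le_rfl disjoint_compl_left t ht0 ht_out
      rwa [← hwdef] at this
    -- the parenthesized factor is at most w
    have hfact : Real.sqrt S * t + (∑ j ∈ T'ᶜ, |h j|) / Real.sqrt S ≤ w := by
      have hSt : Real.sqrt S * t ≤ (∑ j ∈ B₁, |h j|) / Real.sqrt S := by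
        have hsum : (S : ℝ) * t ≤ ∑ j ∈ B₁, |h j| := by
          have := Finset.card_nsmul_le_sum B₁ (fun j => |h j|) t (fun j hj => hmin j hj)
          rwa [hB₁card, nsmul_eq_mul] at this
        rw [le_div_iff₀ hsS]
        calc Real.sqrt S * t * Real.sqrt S = (Real.sqrt S * Real.sqrt S) * t := by ring
          _ = (S : ℝ) * t := by rw [Real.mul_self_sqrt (Nat.cast_nonneg S)]
          _ ≤ ∑ j ∈ B₁, |h j| := hsum
      have hpart : ∑ j ∈ B₁, |h j| + ∑ j ∈ T'ᶜ, |h j| = ∑ j ∈ T0ᶜ, |h j| := by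
        have hdisj : Disjoint B₁ T'ᶜ := by
          refine Finset.disjoint_right.2 fun a ha => ?_
          intro haB
          exact (Finset.mem_compl.1 ha) (Finset.mem_sdiff.1 haB).1
        rw [← Finset.sum_union hdisj]
        congr 1
        ext j
        by_cases hj : j ∈ T0
        · simp [hB₁def, Finset.mem_union, Finset.mem_sdiff, Finset.mem_compl, hj, hT0T' hj]
        · by_cases hj' : j ∈ T' <;>
            simp [hB₁def, Finset.mem_union, Finset.mem_sdiff, Finset.mem_compl, hj, hj']
      have hconeineq : ∑ j ∈ T0ᶜ, |h j| ≤ ∑ j ∈ T0, |h j| := by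
        have := hcone
        unfold coneC at this
        rwa [l1_restr, l1_restr] at this
      have hcs : ∑ j ∈ T0, |h j| ≤ Real.sqrt S * Real.sqrt (∑ j ∈ T0, (h j) ^ 2) := by
        have h1 : (∑ j ∈ T0, |h j|) ^ 2 ≤ (S : ℝ) * ∑ j ∈ T0, (h j) ^ 2 := by
          have := sq_sum_le_card_mul_sum_sq (s := T0) (f := fun j => |h j|)
          simp only [sq_abs] at this
          rw [hT0] at this
          exact_mod_cast this
        have h2 : 0 ≤ ∑ j ∈ T0, |h j| := Finset.sum_nonneg fun j _ => abs_nonneg _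
        calc ∑ j ∈ T0, |h j| = Real.sqrt ((∑ j ∈ T0, |h j|) ^ 2) :=
              (Real.sqrt_sq h2).symm
          _ ≤ Real.sqrt ((S : ℝ) * ∑ j ∈ T0, (h j) ^ 2) := Real.sqrt_le_sqrt h1
          _ = Real.sqrt S * Real.sqrt (∑ j ∈ T0, (h j) ^ 2) := by
              rw [Real.sqrt_mul (Nat.cast_nonneg S)]
      have hT0w : Real.sqrt (∑ j ∈ T0, (h j) ^ 2) ≤ w := by
        rw [hwdef, l2_restr]
        exact Real.sqrt_le_sqrt (Finset.sum_le_sum_of_subset_of_nonneg hT0T'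
          (fun j _ _ => sq_nonneg _))
      have hdivw : (∑ j ∈ T0, |h j|) / Real.sqrt S ≤ w := by
        rw [div_le_iff₀ hsS]
        calc ∑ j ∈ T0, |h j| ≤ Real.sqrt S * Real.sqrt (∑ j ∈ T0, (h j) ^ 2) := hcs
          _ ≤ Real.sqrt S * w := by
              exact mul_le_mul_of_nonneg_left hT0w hsS.le
          _ = w * Real.sqrt S := by ring
      calc Real.sqrt S * t + (∑ j ∈ T'ᶜ, |h j|) / Real.sqrt S
          ≤ (∑ j ∈ B₁, |h j|) / Real.sqrt S + (∑ j ∈ T'ᶜ, |h j|) / Real.sqrt S := by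
            linarith
        _ = (∑ j ∈ T0ᶜ, |h j|) / Real.sqrt S := by rw [← hpart, add_div]
        _ ≤ (∑ j ∈ T0, |h j|) / Real.sqrt S := by gcongr
        _ ≤ w := hdivw
    have hcross2 : |cross| ≤ θ' * w ^ 2 := by
      calc |cross| ≤ θ' * w * (Real.sqrt S * t + (∑ j ∈ T'ᶜ, |h j|) / Real.sqrt S) :=
            hcrossbnd
        _ ≤ θ' * w * w := by
            exact mul_le_mul_of_nonneg_left hfact (mul_nonneg hθ'0 hw0)
        _ = θ' * w ^ 2 := by ring
    -- Cauchy-Schwarz step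
    set q := Real.sqrt (quad M h) with hqdef
    have hq0 : 0 ≤ q := Real.sqrt_nonneg _
    have hquadh : quad M h = q ^ 2 := (Real.sq_sqrt (quad_nonneg hM h)).symm
    set dotTh := restr T' h ⬝ᵥ M.mulVec h with hdotdef
    have hsplitdot : dotTh = Q + cross := by
      rw [hdotdef, hQdef, hcrossdef]
      have hmv : M.mulVec h = M.mulVec (restr T' h) + M.mulVec (restr T'ᶜ h) := by
        rw [← Matrix.mulVec_add, restr_add_compl]
      rw [hmv, dotProduct_add]
      rfl
    have hdotle : dotTh ≤ sd * w * q := by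
      have hcs2 : dotTh ^ 2 ≤ Q * quad M h := quad_cs hM (restr T' h) h
      have h1 : dotTh ≤ Real.sqrt (Q * q ^ 2) := by
        calc dotTh ≤ |dotTh| := le_abs_self _
          _ = Real.sqrt (dotTh ^ 2) := (Real.sqrt_sq_eq_abs _).symm
          _ ≤ Real.sqrt (Q * q ^ 2) := Real.sqrt_le_sqrt (by rw [← hquadh]; exact hcs2)
      have h2 : Real.sqrt (Q * q ^ 2) = Real.sqrt Q * q := by
        rw [Real.sqrt_mul hQ0, Real.sqrt_sq hq0]
      have h3 : Real.sqrt Q ≤ sd * w := by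
        calc Real.sqrt Q ≤ Real.sqrt ((1 + δ') * w ^ 2) := Real.sqrt_le_sqrt hQhigh
          _ = sd * w := by
              rw [Real.sqrt_mul (by linarith : (0:ℝ) ≤ 1 + δ'), Real.sqrt_sq hw0, hsddef]
      calc dotTh ≤ Real.sqrt (Q * q ^ 2) := h1
        _ = Real.sqrt Q * q := h2
        _ ≤ sd * w * q := mul_le_mul_of_nonneg_right h3 hq0
    -- combine
    have hkey : (1 - δ' - θ') * w ^ 2 ≤ sd * w * q := by
      have hQle : Q ≤ sd * w * q + θ' * w ^ 2 := by
        have : Q = dotTh - cross := by rw [hsplitdot]; ring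
        rw [this]
        have habs : -cross ≤ |cross| := neg_le_abs _
        linarith [hdotle, hcross2]
      linarith [hQlow]
    have hfin : (1 - δ' - θ') * w ≤ sd * q := by
      have hw2' : (1 - δ' - θ') * w * w ≤ (sd * q) * w := by
        calc (1 - δ' - θ') * w * w = (1 - δ' - θ') * w ^ 2 := by ring
          _ ≤ sd * w * q := hkey
          _ = (sd * q) * w := by ring
      exact le_of_mul_le_mul_right hw2' hwpos
    -- conclude
    rw [le_div_iff₀ hw₀pos]
    calc c₀ * w₀ ≤ c₀ * w := mul_le_mul_of_nonneg_left hw₀w hc₀.le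
      _ ≤ q := by
          rw [hc₀def, div_mul_eq_mul_div, div_le_iff₀ hsd]
          calc (1 - δ' - θ') * w ≤ sd * q := hfin
            _ = q * sd := by ring
  have hle : c₀ ≤ phi2S S T0 M := le_csInf hSsetne hbound
  linarith
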